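/- The real line ℝ with its natural topology has property (T): for every closed set Y ⊆ ℝ and every function f : Y → ℝ, there exists a continuous function g : ℝ \ Y → ℝ such that, defining h : ℝ → ℝ by h = f on Y and h = g on ℝ \ Y, the oscillation of h at every point x ∈ Y equals the oscillation of f (computed in the subspace Y) at x. -/

import Mathlib

open Topology ENNReal Filter Set

/-- Oscillation of `f` at `x`: inf over neighbourhoods `O ∋ x` of `sup_{ξ∈O} ρ(f x, f ξ)`. -/
noncomputable def oscAt {X Y : Type*} [TopologicalSpace X] [PseudoMetricSpace Y]
    (f : X → Y) (x : X) : ℝ≥0∞ :=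
  ⨅ O ∈ 𝓝 x, ⨆ ξ ∈ O, edist (f x) (f ξ)

/-- Oscillation at `x` of the restriction of `f` to `D` (computed in the subspace `D`). -/
noncomputable def oscWithinAt {X Y : Type*} [TopologicalSpace X] [PseudoMetricSpace Y]
    (f : X → Y) (D : Set X) (x : X) : ℝ≥0∞ :=
  ⨅ O ∈ 𝓝[D] x, ⨆ ξ ∈ O, edist (f x) (f ξ)

/-- `DEps f ε = {x : ω_f(x) ≥ ε}`. -/
noncomputable def DEps {X : Type*} [TopologicalSpace X] (f : X → ℝ) (ε : ℝ) : Set X :=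
  {x | ENNReal.ofReal ε ≤ oscAt f x}

/-- Iterated ε-oscillation sets: `DIter f ε n = D_f^{n*ε}` (with `DIter f ε 0 = X`). -/
noncomputable def DIter {X : Type*} [TopologicalSpace X] (f : X → ℝ) (ε : ℝ) : ℕ → Set X
  | 0 => Set.univ
  | n + 1 => {x ∈ DIter f ε n | ENNReal.ofReal ε ≤ oscWithinAt f (DIter f ε n) x}

/-- The class `u𝒮_n(X)`. -/
def uS {X : Type*} [TopologicalSpace X] (n : ℕ) (f : X → ℝ) : Prop :=
  ∀ ε : ℝ, 0 < ε → DIter f ε (n + 1) = ∅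

/-- Iterated closed discontinuity sets `D_f^{n*0}` (with `DIter0 f 0 = X`). -/
def DIter0 {X : Type*} [TopologicalSpace X] (f : X → ℝ) : ℕ → Set X
  | 0 => Set.univ
  | n + 1 => closure {x ∈ DIter0 f n | ¬ ContinuousWithinAt f (DIter0 f n) x}

/-- The class `𝒮_n(X)`. -/
def SClass {X : Type*} [TopologicalSpace X] (n : ℕ) (f : X → ℝ) : Prop :=
  DIter0 f (n + 1) = ∅

/-- `f` is `B₁**` : the restriction of `f` to its set of discontinuity points is continuous. -/
def B1ss {X Y : Type*} [TopologicalSpace X] [PseudoMetricSpace Y] (f : X → Y) : Prop :=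
  ∀ x ∈ {x | ¬ ContinuousAt f x}, ContinuousWithinAt f {x | ¬ ContinuousAt f x} x

open scoped Classical in
/-- Property (T): for every closed `Y` and every `f : Y → ℝ` there is a continuous
`g` on the complement such that the glued function has, at each point of `Y`, the same
oscillation as `f` computed within `Y`. -/
def PropertyT (X : Type*) [TopologicalSpace X] : Prop :=
  ∀ Y : Set X, IsClosed Y → ∀ f : X → ℝ, ∃ g : X → ℝ, ContinuousOn g Yᶜ ∧
    ∀ x ∈ Y, oscAt (Y.piecewise f g) x = oscWithinAt f Y x

open scoped Classical

/-- The interpolating function on the complement. -/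
noncomputable def gY (Y : Set ℝ) (f : ℝ → ℝ) (t : ℝ) : ℝ :=
  if h1 : (Y ∩ Iic t).Nonempty then
    if h2 : (Y ∩ Ici t).Nonempty then
      f (sSup (Y ∩ Iic t)) +
        ((t - sSup (Y ∩ Iic t)) / (sInf (Y ∩ Ici t) - sSup (Y ∩ Iic t))) *
          (f (sInf (Y ∩ Ici t)) - f (sSup (Y ∩ Iic t)))
    else f (sSup (Y ∩ Iic t))
  else if h2 : (Y ∩ Ici t).Nonempty then f (sInf (Y ∩ Ici t)) else 0

lemma la_mem {Y : Set ℝ} (hY : IsClosed Y) {t : ℝ} (h1 : (Y ∩ Iic t).Nonempty) :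
    sSup (Y ∩ Iic t) ∈ Y ∩ Iic t :=
  (hY.inter isClosed_Iic).csSup_mem h1 ⟨t, fun _ hy => hy.2⟩

lemma lb_mem {Y : Set ℝ} (hY : IsClosed Y) {t : ℝ} (h2 : (Y ∩ Ici t).Nonempty) :
    sInf (Y ∩ Ici t) ∈ Y ∩ Ici t :=
  (hY.inter isClosed_Ici).csInf_mem h2 ⟨t, fun _ hy => hy.2⟩

lemma not_mem_gap {Y : Set ℝ} {t : ℝ} (h1 : (Y ∩ Iic t).Nonempty)
    (h2 : (Y ∩ Ici t).Nonempty) {y : ℝ} (hy : y ∈ Y) :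
    y ∉ Ioo (sSup (Y ∩ Iic t)) (sInf (Y ∩ Ici t)) := by
  rintro ⟨hy1, hy2⟩
  rcases le_total y t with h | h
  · have := le_csSup (⟨t, fun _ hz => hz.2⟩ : BddAbove (Y ∩ Iic t))
      (show y ∈ Y ∩ Iic t from ⟨hy, h⟩)
    linarith
  · have := csInf_le (⟨t, fun _ hz => hz.2⟩ : BddBelow (Y ∩ Ici t))
      (show y ∈ Y ∩ Ici t from ⟨hy, h⟩)
    linarith

lemma gY_continuousOn {Y : Set ℝ} (hY : IsClosed Y) (hne : Y.Nonempty) (f : ℝ → ℝ) :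
    ContinuousOn (gY Y f) Yᶜ := by
  intro t ht
  apply ContinuousAt.continuousWithinAt
  by_cases h1 : (Y ∩ Iic t).Nonempty
  · obtain ⟨hAY, hAt⟩ := la_mem hY h1
    set A := sSup (Y ∩ Iic t) with hA
    have hAlt : A < t := lt_of_le_of_ne hAt (fun h => ht (h ▸ hAY))
    by_cases h2 : (Y ∩ Ici t).Nonempty
    · obtain ⟨hBY, hBt⟩ := lb_mem hY h2
      set B := sInf (Y ∩ Ici t) with hB
      have hBgt : t < B := lt_of_le_of_ne hBt (fun h => ht (h ▸ hBY))
      have hcont : ContinuousAt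
          (fun s => f A + ((s - A) / (B - A)) * (f B - f A)) t := by
        fun_prop
      apply hcont.congr
      filter_upwards [isOpen_Ioo.mem_nhds (show t ∈ Ioo A B from ⟨hAlt, hBgt⟩)] with s hs
      have h1' : (Y ∩ Iic s).Nonempty := ⟨A, hAY, le_of_lt hs.1⟩
      have h2' : (Y ∩ Ici s).Nonempty := ⟨B, hBY, le_of_lt hs.2⟩
      have hlas : sSup (Y ∩ Iic s) = A := by
        apply le_antisymm
        · apply csSup_le h1'
          intro y hy
          by_contra hlt
          exact not_mem_gap h1 h2 hy.1 ⟨not_le.1 hlt, lt_of_le_of_lt hy.2 hs.2⟩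
        · exact le_csSup ⟨s, fun _ hz => hz.2⟩ ⟨hAY, le_of_lt hs.1⟩
      have hlbs : sInf (Y ∩ Ici s) = B := by
        apply le_antisymm
        · exact csInf_le ⟨s, fun _ hz => hz.2⟩ ⟨hBY, le_of_lt hs.2⟩
        · apply le_csInf h2'
          intro y hy
          by_contra hlt
          exact not_mem_gap h1 h2 hy.1 ⟨lt_of_lt_of_le hs.1 hy.2, not_le.1 hlt⟩
      simp only [gY, dif_pos h1', dif_pos h2', hlas, hlbs]
    · -- no points of Y above; g is constant f A on Ioi A
      have hYle : ∀ y ∈ Y, y ≤ A := by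
        intro y hy
        rcases le_total y t with h | h
        · exact le_csSup ⟨t, fun _ hz => hz.2⟩ ⟨hy, h⟩
        · exact absurd ⟨hy, h⟩ (fun hc => h2 ⟨y, hc⟩)
      have hc : ContinuousAt (fun _ : ℝ => f A) t := continuousAt_const
      apply hc.congr
      filter_upwards [isOpen_Ioi.mem_nhds (show t ∈ Ioi A from hAlt)] with s hs
      have h1' : (Y ∩ Iic s).Nonempty := ⟨A, hAY, show A ≤ s from le_of_lt (show A < s from hs)⟩
      have h2' : ¬ (Y ∩ Ici s).Nonempty := by
        rintro ⟨y, hyY, hys⟩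
        exact absurd (hYle y hyY) (not_le.2 (lt_of_lt_of_le hs hys))
      have hlas : sSup (Y ∩ Iic s) = A :=
        le_antisymm (csSup_le h1' fun y hy => hYle y hy.1)
          (le_csSup ⟨s, fun _ hz => hz.2⟩ ⟨hAY, show A ≤ s from le_of_lt (show A < s from hs)⟩)
      simp only [gY, dif_pos h1', dif_neg h2', hlas]
  · by_cases h2 : (Y ∩ Ici t).Nonempty
    · obtain ⟨hBY, hBt⟩ := lb_mem hY h2
      set B := sInf (Y ∩ Ici t) with hB
      have hBgt : t < B := lt_of_le_of_ne hBt (fun h => ht (h ▸ hBY))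
      have hYge : ∀ y ∈ Y, B ≤ y := by
        intro y hy
        rcases le_total y t with h | h
        · exact absurd ⟨hy, h⟩ (fun hc => h1 ⟨y, hc⟩)
        · exact csInf_le ⟨t, fun _ hz => hz.2⟩ ⟨hy, h⟩
      have hc : ContinuousAt (fun _ : ℝ => f B) t := continuousAt_const
      apply hc.congr
      filter_upwards [isOpen_Iio.mem_nhds (show t ∈ Iio B from hBgt)] with s hs
      have h2' : (Y ∩ Ici s).Nonempty := ⟨B, hBY, show s ≤ B from le_of_lt (show s < B from hs)⟩
      have h1' : ¬ (Y ∩ Iic s).Nonempty := by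
        rintro ⟨y, hyY, hys⟩
        exact absurd (hYge y hyY) (not_le.2 (lt_of_le_of_lt hys hs))
      have hlbs : sInf (Y ∩ Ici s) = B :=
        le_antisymm (csInf_le ⟨s, fun _ hz => hz.2⟩ ⟨hBY, show s ≤ B from le_of_lt (show s < B from hs)⟩)
          (le_csInf h2' fun y hy => hYge y hy.1)
      simp only [gY, dif_neg h1', dif_pos h2', hlbs]
    · exfalso
      obtain ⟨y, hy⟩ := hne
      rcases le_total y t with h | h
      · exact h1 ⟨y, hy, h⟩
      · exact h2 ⟨y, hy, h⟩

set_option maxHeartbeats 1000000 in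
theorem stmt_14 : PropertyT ℝ := by
  intro Y hY f
  rcases Y.eq_empty_or_nonempty with rfl | hne
  · exact ⟨fun _ => 0, continuousOn_const, fun x hx => absurd hx (notMem_empty x)⟩
  refine ⟨gY Y f, gY_continuousOn hY hne f, fun x hx => ?_⟩
  set h : ℝ → ℝ := Y.piecewise f (gY Y f) with hh
  have hhx : h x = f x := Set.piecewise_eq_of_mem _ _ _ hx
  apply le_antisymm
  · -- hard direction: oscAt h x ≤ oscWithinAt f Y x
    by_contra hlt
    push_neg at hlt
    obtain ⟨r, hr1, hr2⟩ := exists_between hlt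
    have hrtop : r ≠ ⊤ := (lt_of_lt_of_le hr2 le_top).ne
    rw [oscWithinAt] at hr1
    rw [iInf_lt_iff] at hr1
    obtain ⟨V, hr1⟩ := hr1
    rw [iInf_lt_iff] at hr1
    obtain ⟨hV, hS⟩ := hr1
    set S := ⨆ ξ ∈ V, edist (f x) (f ξ) with hSdef
    have hStop : S ≠ ⊤ := (lt_of_lt_of_le hS le_top).ne
    set σ := S.toReal with hσ
    set R := r.toReal with hR
    have hσR : σ < R := by
      rw [hσ, hR]
      exact (ENNReal.toReal_lt_toReal hStop hrtop).2 hS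
    have hσ0 : 0 ≤ σ := ENNReal.toReal_nonneg
    -- get δ
    rw [mem_nhdsWithin] at hV
    obtain ⟨U, hUopen, hxU, hUV⟩ := hV
    obtain ⟨δ, hδ0, hball⟩ := Metric.isOpen_iff.1 hUopen x hxU
    have Hnear : ∀ y ∈ Y, |y - x| < δ → |f x - f y| ≤ σ := by
      intro y hyY hyd
      have hyV : y ∈ V := hUV ⟨hball (by rwa [Metric.mem_ball, Real.dist_eq]), hyY⟩
      have : edist (f x) (f y) ≤ S := le_iSup₂ (f := fun ξ _ => edist (f x) (f ξ)) y hyV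
      rw [edist_dist] at this
      rw [← Real.dist_eq]
      exact (ENNReal.ofReal_le_iff_le_toReal hStop).1 this
    -- the long-gap constant
    set M : ℝ :=
      (if hR : (Y ∩ Ici (x + δ)).Nonempty then |f x - f (sInf (Y ∩ Ici (x + δ)))| else 0) +
      (if hL : (Y ∩ Iic (x - δ)).Nonempty then |f x - f (sSup (Y ∩ Iic (x - δ)))| else 0)
      with hM
    have hM0 : 0 ≤ M := by
      apply add_nonneg <;> · split <;> positivity
    set δ' : ℝ := min (δ / 2) (δ * (R - σ) / (2 * (M + 1))) with hδ'
    have hδ'0 : 0 < δ' := by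
      apply lt_min (by linarith)
      apply div_pos (mul_pos hδ0 (by linarith)) (by linarith)
    have hδ'half : δ' ≤ δ / 2 := min_le_left _ _
    have hδ'M : δ' ≤ δ * (R - σ) / (2 * (M + 1)) := min_le_right _ _
    -- main pointwise bound
    have Hmain : ∀ ξ ∈ Ioo (x - δ') (x + δ'), |f x - h ξ| ≤ R := by
      intro ξ hξ
      obtain ⟨hξ1, hξ2⟩ := hξ
      by_cases hξY : ξ ∈ Y
      · rw [hh, Set.piecewise_eq_of_mem _ _ _ hξY]
        have : |ξ - x| < δ := by
          rw [abs_sub_lt_iff]; constructor <;> linarith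
        linarith [Hnear ξ hξY this]
      · rw [hh, Set.piecewise_eq_of_notMem _ _ _ hξY]
        rcases lt_trichotomy ξ x with hlt | heq | hgt
        · -- ξ < x
          have h2 : (Y ∩ Ici ξ).Nonempty := ⟨x, hx, le_of_lt hlt⟩
          obtain ⟨hbY, hbξ⟩ := lb_mem hY h2
          set b := sInf (Y ∩ Ici ξ) with hb
          have hbgt : ξ < b := lt_of_le_of_ne hbξ (fun h => hξY (h ▸ hbY))
          have hblex : b ≤ x := csInf_le ⟨ξ, fun _ hz => hz.2⟩ ⟨hx, le_of_lt hlt⟩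
          have hfb : |f x - f b| ≤ σ := by
            apply Hnear b hbY
            rw [abs_sub_lt_iff]; constructor <;> linarith
          by_cases h1 : (Y ∩ Iic ξ).Nonempty
          · obtain ⟨haY, haξ⟩ := la_mem hY h1
            set a := sSup (Y ∩ Iic ξ) with ha
            have halt : a < ξ := lt_of_le_of_ne haξ (fun h => hξY (h ▸ haY))
            set θ := (ξ - a) / (b - a) with hθ
            have hg : gY Y f ξ = f a + θ * (f b - f a) := by
              rw [gY, dif_pos h1, dif_pos h2]
            have hab : a < b := lt_trans halt hbgt
            have hθ0 : 0 ≤ θ := div_nonneg (by linarith) (by linarith)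
            have hθ1 : θ ≤ 1 := (div_le_one (by linarith)).2 (by linarith)
            have key : |f x - gY Y f ξ| ≤ (1 - θ) * |f x - f a| + θ * |f x - f b| := by
              have hid : f x - gY Y f ξ = (1 - θ) * (f x - f a) + θ * (f x - f b) := by
                rw [hg]; ring
              calc |f x - gY Y f ξ| = |(1 - θ) * (f x - f a) + θ * (f x - f b)| := by
                    rw [hid]
                _ ≤ |(1 - θ) * (f x - f a)| + |θ * (f x - f b)| := abs_add_le _ _
                _ = (1 - θ) * |f x - f a| + θ * |f x - f b| := by
                    rw [abs_mul, abs_mul, abs_of_nonneg (by linarith), abs_of_nonneg hθ0]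
            rcases lt_or_ge (x - δ) a with hanear | hafar
            · have hfa : |f x - f a| ≤ σ := by
                apply Hnear a haY
                rw [abs_sub_lt_iff]; constructor <;> linarith
              nlinarith [mul_nonneg hθ0 (sub_nonneg.2 hfb),
                mul_nonneg (sub_nonneg.2 hθ1) (sub_nonneg.2 hfa)]
            · -- long gap to the left
              have haset : (Y ∩ Iic (x - δ)).Nonempty := ⟨a, haY, hafar⟩
              have haeq : a = sSup (Y ∩ Iic (x - δ)) := by
                apply le_antisymm
                · exact le_csSup (⟨x - δ, fun _ hz => hz.2⟩ : BddAbove (Y ∩ Iic (x - δ)))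
                    ⟨haY, hafar⟩
                · exact csSup_le_csSup (⟨ξ, fun _ hz => hz.2⟩ : BddAbove (Y ∩ Iic ξ)) haset
                    (fun y hy => ⟨hy.1, hy.2.trans (show x - δ ≤ ξ by linarith)⟩)
              have hfaM : |f x - f a| ≤ M := by
                rw [hM, haeq]
                rw [dif_pos haset]
                have : (0:ℝ) ≤
                    (if hR : (Y ∩ Ici (x + δ)).Nonempty
                      then |f x - f (sInf (Y ∩ Ici (x + δ)))| else 0) := by
                  split <;> positivity
                linarith
              have h1θ : 1 - θ = (b - ξ) / (b - a) := by
                have hba : b - a ≠ 0 := sub_ne_zero.2 hab.ne'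
                rw [hθ]
                field_simp
                ring
              have h1θsmall : 1 - θ ≤ (R - σ) / (M + 1) := by
                rw [h1θ]
                have hd1 : b - ξ ≤ δ' := by linarith
                have hd2 : δ / 2 ≤ b - a := by linarith
                calc (b - ξ) / (b - a) ≤ δ' / (δ / 2) :=
                      div_le_div₀ hδ'0.le hd1 (by linarith) hd2
                  _ ≤ (R - σ) / (M + 1) := by
                      rw [div_le_div_iff₀ (by linarith) (by linarith)]
                      rw [le_div_iff₀ (show (0:ℝ) < 2 * (M + 1) by linarith)] at hδ'M
                      nlinarith
              have hstep : (1 - θ) * |f x - f a| ≤ R - σ := by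
                calc (1 - θ) * |f x - f a| ≤ ((R - σ) / (M + 1)) * M := by
                      apply mul_le_mul h1θsmall hfaM (abs_nonneg _)
                      apply div_nonneg (by linarith) (by linarith)
                  _ ≤ R - σ := by
                      rw [div_mul_eq_mul_div, div_le_iff₀ (by linarith)]
                      nlinarith
              nlinarith [mul_nonneg hθ0 (sub_nonneg.2 hfb)]
          · -- no Y below ξ: g = f b
            have hg : gY Y f ξ = f b := by
              rw [gY, dif_neg h1, dif_pos h2]
            rw [hg]; linarith
        · exact absurd hx (heq ▸ hξY)
        · -- ξ > x
          have h1 : (Y ∩ Iic ξ).Nonempty := ⟨x, hx, le_of_lt hgt⟩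
          obtain ⟨haY, haξ⟩ := la_mem hY h1
          set a := sSup (Y ∩ Iic ξ) with ha
          have halt : a < ξ := lt_of_le_of_ne haξ (fun h => hξY (h ▸ haY))
          have hagex : x ≤ a := le_csSup ⟨ξ, fun _ hz => hz.2⟩ ⟨hx, le_of_lt hgt⟩
          have hfa : |f x - f a| ≤ σ := by
            apply Hnear a haY
            rw [abs_sub_lt_iff]; constructor <;> linarith
          by_cases h2 : (Y ∩ Ici ξ).Nonempty
          · obtain ⟨hbY, hbξ⟩ := lb_mem hY h2
            set b := sInf (Y ∩ Ici ξ) with hb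
            have hbgt : ξ < b := lt_of_le_of_ne hbξ (fun h => hξY (h ▸ hbY))
            set θ := (ξ - a) / (b - a) with hθ
            have hg : gY Y f ξ = f a + θ * (f b - f a) := by
              rw [gY, dif_pos h1, dif_pos h2]
            have hab : a < b := lt_trans halt hbgt
            have hθ0 : 0 ≤ θ := div_nonneg (by linarith) (by linarith)
            have hθ1 : θ ≤ 1 := (div_le_one (by linarith)).2 (by linarith)
            have key : |f x - gY Y f ξ| ≤ (1 - θ) * |f x - f a| + θ * |f x - f b| := by
              have hid : f x - gY Y f ξ = (1 - θ) * (f x - f a) + θ * (f x - f b) := by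
                rw [hg]; ring
              calc |f x - gY Y f ξ| = |(1 - θ) * (f x - f a) + θ * (f x - f b)| := by
                    rw [hid]
                _ ≤ |(1 - θ) * (f x - f a)| + |θ * (f x - f b)| := abs_add_le _ _
                _ = (1 - θ) * |f x - f a| + θ * |f x - f b| := by
                    rw [abs_mul, abs_mul, abs_of_nonneg (by linarith), abs_of_nonneg hθ0]
            rcases lt_or_ge b (x + δ) with hbnear | hbfar
            · have hfb : |f x - f b| ≤ σ := by
                apply Hnear b hbY
                rw [abs_sub_lt_iff]; constructor <;> linarith
              nlinarith [mul_nonneg hθ0 (sub_nonneg.2 hfb),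
                mul_nonneg (sub_nonneg.2 hθ1) (sub_nonneg.2 hfa)]
            · -- long gap to the right
              have hbset : (Y ∩ Ici (x + δ)).Nonempty := ⟨b, hbY, hbfar⟩
              have hbeq : b = sInf (Y ∩ Ici (x + δ)) := by
                apply le_antisymm
                · exact csInf_le_csInf (⟨ξ, fun _ hz => hz.2⟩ : BddBelow (Y ∩ Ici ξ)) hbset
                    (fun y hy => ⟨hy.1, (show ξ ≤ x + δ by linarith).trans hy.2⟩)
                · exact csInf_le (⟨x + δ, fun _ hz => hz.2⟩ : BddBelow (Y ∩ Ici (x + δ)))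
                    ⟨hbY, hbfar⟩
              have hfbM : |f x - f b| ≤ M := by
                rw [hM, hbeq]
                rw [dif_pos hbset]
                have : (0:ℝ) ≤
                    (if hL : (Y ∩ Iic (x - δ)).Nonempty
                      then |f x - f (sSup (Y ∩ Iic (x - δ)))| else 0) := by
                  split <;> positivity
                linarith
              have hθsmall : θ ≤ (R - σ) / (M + 1) := by
                rw [hθ]
                have hd1 : ξ - a ≤ δ' := by linarith
                have hd2 : δ / 2 ≤ b - a := by linarith
                calc (ξ - a) / (b - a) ≤ δ' / (δ / 2) :=
                      div_le_div₀ hδ'0.le hd1 (by linarith) hd2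
                  _ ≤ (R - σ) / (M + 1) := by
                      rw [div_le_div_iff₀ (by linarith) (by linarith)]
                      rw [le_div_iff₀ (show (0:ℝ) < 2 * (M + 1) by linarith)] at hδ'M
                      nlinarith
              have hstep : θ * |f x - f b| ≤ R - σ := by
                calc θ * |f x - f b| ≤ ((R - σ) / (M + 1)) * M := by
                      apply mul_le_mul hθsmall hfbM (abs_nonneg _)
                      apply div_nonneg (by linarith) (by linarith)
                  _ ≤ R - σ := by
                      rw [div_mul_eq_mul_div, div_le_iff₀ (by linarith)]
                      nlinarith
              nlinarith [mul_nonneg (sub_nonneg.2 hθ1) (sub_nonneg.2 hfa)]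
          · -- no Y above ξ: g = f a
            have hg : gY Y f ξ = f a := by
              rw [gY, dif_pos h1, dif_neg h2]
            rw [hg]; linarith
    -- conclude oscAt h x ≤ r, contradiction
    have hosc : oscAt h x ≤ r := by
      rw [oscAt]
      have hmem : Ioo (x - δ') (x + δ') ∈ 𝓝 x :=
        isOpen_Ioo.mem_nhds ⟨by linarith, by linarith⟩
      refine le_trans (iInf₂_le _ hmem) ?_
      refine iSup₂_le fun ξ hξ => ?_
      rw [hhx, edist_dist, Real.dist_eq]
      calc ENNReal.ofReal |f x - h ξ| ≤ ENNReal.ofReal R :=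
            ENNReal.ofReal_le_ofReal (Hmain ξ hξ)
        _ ≤ r := ENNReal.ofReal_toReal_le
    exact absurd hosc (not_le.2 hr2)
  · -- easy direction
    rw [oscAt, oscWithinAt]
    refine le_iInf₂ fun O hO => ?_
    refine iInf₂_le_of_le (O ∩ Y)
      (inter_mem (mem_nhdsWithin_of_mem_nhds hO) self_mem_nhdsWithin) ?_
    refine iSup₂_le fun ξ hξ => ?_
    refine le_iSup₂_of_le ξ hξ.1 ?_
    have : h ξ = f ξ := Set.piecewise_eq_of_mem _ _ _ hξ.2
    rw [hhx, this]
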